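/- Let R = k[x,y]/(y² − x³ − λx²), let s be the singular point of the curve (maximal ideal m = (x,y)), and let θ ∈ k. The ideal I_θ = ⟨x², y + θx⟩ ⊂ R becomes principal after localization at m if and only if θ² − λ ≠ 0. -/

import Mathlib

set_option synthInstance.maxHeartbeats 1000000
set_option maxHeartbeats 1000000

/-- The coordinate ring `R = k[x,y]/(y² − x³ − λx²)` of the singular cubic. -/
noncomputable abbrev NodalRing (k : Type*) [Field k] (lam : k) : Type _ :=
  MvPolynomial (Fin 2) k ⧸
    (Ideal.span {(MvPolynomial.X 1 : MvPolynomial (Fin 2) k) ^ 2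
      - MvPolynomial.X 0 ^ 3 - MvPolynomial.C lam * MvPolynomial.X 0 ^ 2})

/-- The class of `x` in `R`. -/
noncomputable abbrev nx (k : Type*) [Field k] (lam : k) : NodalRing k lam :=
  Ideal.Quotient.mk _ (MvPolynomial.X 0)

/-- The class of `y` in `R`. -/
noncomputable abbrev ny (k : Type*) [Field k] (lam : k) : NodalRing k lam :=
  Ideal.Quotient.mk _ (MvPolynomial.X 1)

/-- The maximal ideal `m = (x, y)` of `R` at the singular point. -/
noncomputable abbrev singMax (k : Type*) [Field k] (lam : k) : Ideal (NodalRing k lam) :=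
  Ideal.span {nx k lam, ny k lam}

namespace NodalAux
open MvPolynomial
variable (k : Type*) [Field k]
noncomputable def phiAux (θ : k) : MvPolynomial (Fin 2) k →ₐ[k] Polynomial k :=
  aeval ![Polynomial.X ^ 2 - Polynomial.C (θ^2),
          Polynomial.X ^ 3 - Polynomial.C (θ^2) * Polynomial.X]
noncomputable def phi (θ : k) : NodalRing k (θ^2) →ₐ[k] Polynomial k :=
  Ideal.Quotient.liftₐ _ (phiAux k θ) (by
    intro a ha
    rw [Ideal.mem_span_singleton] at ha
    obtain ⟨c, rfl⟩ := ha
    rw [map_mul]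
    have : phiAux k θ ((MvPolynomial.X 1 : MvPolynomial (Fin 2) k) ^ 2
      - MvPolynomial.X 0 ^ 3 - MvPolynomial.C (θ^2) * MvPolynomial.X 0 ^ 2) = 0 := by
      simp [phiAux]; ring
    rw [this, zero_mul])
@[simp] lemma phi_mk (θ : k) (g : MvPolynomial (Fin 2) k) :
    phi k θ (Ideal.Quotient.mk _ g) = phiAux k θ g := by
  simp [phi, Ideal.Quotient.liftₐ_apply]
  rfl
noncomputable def eps (lam : k) : NodalRing k lam →ₐ[k] k :=
  Ideal.Quotient.liftₐ _ (aeval (fun _ => (0:k))) (by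
    intro a ha
    rw [Ideal.mem_span_singleton] at ha
    obtain ⟨c, rfl⟩ := ha
    rw [map_mul]
    have : (aeval (fun _ => (0:k))) ((MvPolynomial.X 1 : MvPolynomial (Fin 2) k) ^ 2
      - MvPolynomial.X 0 ^ 3 - MvPolynomial.C lam * MvPolynomial.X 0 ^ 2) = 0 := by simp
    rw [this, zero_mul])
@[simp] lemma eps_mk (lam : k) (g : MvPolynomial (Fin 2) k) :
    eps k lam (Ideal.Quotient.mk _ g) = constantCoeff g := by
  simp [eps, Ideal.Quotient.liftₐ_apply]
lemma eps_ne_zero {lam : k} {s : NodalRing k lam} (hs : s ∉ singMax k lam) :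
    eps k lam s ≠ 0 := by
  intro h
  apply hs
  obtain ⟨f, rfl⟩ := Ideal.Quotient.mk_surjective s
  rw [eps_mk] at h
  have hf : f ∈ Ideal.span (MvPolynomial.X '' (Set.univ : Set (Fin 2))) := by
    rw [MvPolynomial.mem_ideal_span_X_image]
    intro m hm
    have hm0 : m ≠ 0 := by
      rintro rfl
      rw [MvPolynomial.mem_support_iff] at hm
      exact hm h
    obtain ⟨i, hi⟩ : ∃ i, m i ≠ 0 := by
      by_contra hc
      push_neg at hc
      exact hm0 (Finsupp.ext hc)
    exact ⟨i, Set.mem_univ _, hi⟩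
  have himg : (MvPolynomial.X '' (Set.univ : Set (Fin 2)) : Set (MvPolynomial (Fin 2) k))
      = {MvPolynomial.X 0, MvPolynomial.X 1} := by
    ext p
    simp [Set.mem_image, Fin.exists_fin_two, or_comm]
    tauto
  rw [himg] at hf
  obtain ⟨a, b, hab⟩ := Ideal.mem_span_pair.mp hf
  refine Ideal.mem_span_pair.mpr ⟨Ideal.Quotient.mk _ a, Ideal.Quotient.mk _ b, ?_⟩
  rw [← hab]; simp

-- NEW PART
lemma phi_eval (θ c : k) (hc : c = θ ∨ c = -θ) (f : NodalRing k (θ^2)) :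
    (phi k θ f).eval c = eps k (θ^2) f := by
  obtain ⟨g, rfl⟩ := Ideal.Quotient.mk_surjective f
  rw [phi_mk, eps_mk]
  have key : (Polynomial.aeval c : Polynomial k →ₐ[k] k).comp (phiAux k θ)
      = aeval (fun _ => (0:k)) := by
    apply MvPolynomial.algHom_ext
    intro i
    fin_cases i <;>
      simp [phiAux] <;> rcases hc with rfl | rfl <;> ring
  have := AlgHom.congr_fun key g
  simp only [AlgHom.coe_comp, Function.comp_apply] at this
  rw [← Polynomial.coe_aeval_eq_eval, this]
  simp

lemma phi_x (θ : k) : phi k θ (nx k (θ^2))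
    = (Polynomial.X - Polynomial.C θ) * (Polynomial.X + Polynomial.C θ) := by
  rw [nx, phi_mk]
  simp [phiAux]
  ring

lemma phi_u (θ : k) : phi k θ (ny k (θ^2) + algebraMap k _ θ * nx k (θ^2))
    = (Polynomial.X - Polynomial.C θ) * (Polynomial.X + Polynomial.C θ)^2 := by
  rw [map_add, map_mul, AlgHom.commutes, nx, ny, phi_mk, phi_mk]
  simp [phiAux, Polynomial.algebraMap_eq]
  ring

lemma phi_coeff_one (f : NodalRing k ((0:k)^2)) : (phi k 0 f).coeff 1 = 0 := by
  obtain ⟨g, rfl⟩ := Ideal.Quotient.mk_surjective f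
  rw [phi_mk]
  induction g using MvPolynomial.induction_on with
  | C a => simp [phiAux, Polynomial.coeff_C]
  | add p q hp hq => rw [map_add, Polynomial.coeff_add, hp, hq, add_zero]
  | mul_X p i _ =>
      rw [map_mul]
      fin_cases i <;>
        simp [phiAux, Polynomial.coeff_mul_X_pow']

end NodalAux

namespace NodalAux
open MvPolynomial
variable (k : Type*) [Field k]

lemma factor_ne_zero (θ : k) :
    (Polynomial.X - Polynomial.C θ) * (Polynomial.X + Polynomial.C θ)^2 ≠ (0 : Polynomial k) := by
  have h2 := Polynomial.X_sub_C_ne_zero (R := k) (-θ)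
  rw [Polynomial.C_neg, sub_neg_eq_add] at h2
  exact mul_ne_zero (Polynomial.X_sub_C_ne_zero θ) (pow_ne_zero _ h2)

/-- `u ∉ (x²)` after localization: no relation `s·u = r·x²` with `s ∉ m`. -/
lemma no_rel_u_x2 (θ : k) (s r : NodalRing k (θ^2)) (hs : s ∉ singMax k (θ^2))
    (h : s * (ny k (θ^2) + algebraMap k _ θ * nx k (θ^2)) = r * (nx k (θ^2))^2) : False := by
  have E := congrArg (phi k θ) h
  simp only [map_mul, map_pow, phi_x, phi_u] at E
  have E2 : phi k θ s = phi k θ r * (Polynomial.X - Polynomial.C θ) := by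
    apply mul_right_cancel₀ (factor_ne_zero k θ)
    linear_combination E
  have h0 : (phi k θ s).eval θ = 0 := by rw [E2]; simp
  exact eps_ne_zero k hs ((phi_eval k θ θ (Or.inl rfl) s).symm.trans h0)

/-- `x² ∉ (u)` after localization: no relation `s·x² = r·u` with `s ∉ m`. -/
lemma no_rel_x2_u [CharZero k] (θ : k) (s r : NodalRing k (θ^2))
    (hs : s ∉ singMax k (θ^2))
    (h : s * (nx k (θ^2))^2 = r * (ny k (θ^2) + algebraMap k _ θ * nx k (θ^2))) : False := by
  have E := congrArg (phi k θ) h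
  simp only [map_mul, map_pow, phi_x, phi_u] at E
  have E2 : phi k θ r = phi k θ s * (Polynomial.X - Polynomial.C θ) := by
    apply mul_right_cancel₀ (factor_ne_zero k θ)
    linear_combination -E
  by_cases hθ : θ = 0
  · subst hθ
    have h1 : (phi k 0 r).coeff 1 = 0 := phi_coeff_one k r
    rw [E2] at h1
    simp only [Polynomial.C_0, sub_zero] at h1
    rw [show (1:ℕ) = 0 + 1 from rfl, Polynomial.coeff_mul_X,
      Polynomial.coeff_zero_eq_eval_zero] at h1
    exact eps_ne_zero k hs ((phi_eval k 0 0 (Or.inl rfl) s).symm.trans h1)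
  · have e1 : (phi k θ r).eval θ = 0 := by rw [E2]; simp
    have e2 : (phi k θ r).eval (-θ) = eps k (θ^2) s * (-θ - θ) := by
      rw [E2, Polynomial.eval_mul, Polynomial.eval_sub, Polynomial.eval_X, Polynomial.eval_C,
        phi_eval k θ (-θ) (Or.inr rfl) s]
    have e3 : (phi k θ r).eval θ = (phi k θ r).eval (-θ) := by
      rw [phi_eval k θ θ (Or.inl rfl) r, phi_eval k θ (-θ) (Or.inr rfl) r]
    rw [e1, e2] at e3
    have : eps k (θ^2) s * (-θ - θ) ≠ 0 := by
      apply mul_ne_zero (eps_ne_zero k hs)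
      intro hz
      apply hθ
      have : (2:k) * θ = 0 := by linear_combination -hz
      rcases mul_eq_zero.mp this with h2 | h2
      · exact absurd h2 two_ne_zero
      · exact h2
    exact this e3.symm

/-- Pull a span-membership in the localization back to the ring. -/
lemma pullback (lam : k) [hm : (singMax k lam).IsPrime] (a b : NodalRing k lam)
    (h : algebraMap _ (Localization.AtPrime (singMax k lam)) b ∈
      Ideal.span {algebraMap (NodalRing k lam) (Localization.AtPrime (singMax k lam)) a}) :
    ∃ s r : NodalRing k lam, s ∉ singMax k lam ∧ s * b = r * a := by
  rw [Ideal.mem_span_singleton'] at h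
  obtain ⟨e, he⟩ := h
  obtain ⟨⟨r0, s0⟩, rfl⟩ := IsLocalization.mk'_surjective (singMax k lam).primeCompl e
  dsimp only at he
  have h2 : algebraMap (NodalRing k lam) (Localization.AtPrime (singMax k lam)) ((s0 : NodalRing k lam) * b)
      = algebraMap _ _ (r0 * a) := by
    rw [map_mul, map_mul, ← he, ← mul_assoc, mul_comm (algebraMap _ _ (s0 : NodalRing k lam)),
      IsLocalization.mk'_spec]
  obtain ⟨c, hc⟩ := (IsLocalization.eq_iff_exists (singMax k lam).primeCompl _).mp h2
  refine ⟨c * s0, c * r0, (c * s0 : (singMax k lam).primeCompl).2, ?_⟩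
  calc (c : NodalRing k lam) * s0 * b = c * (s0 * b) := by ring
    _ = c * (r0 * a) := hc
    _ = c * r0 * a := by ring
end NodalAux

namespace NodalAux

lemma span_pair_cases {L : Type*} [CommRing L] [IsLocalRing L] (A B g : L)
    (hg : Ideal.span {A, B} = Ideal.span {g}) :
    A ∈ Ideal.span ({B} : Set L) ∨ B ∈ Ideal.span ({A} : Set L) := by
  have hA : A ∈ Ideal.span ({g} : Set L) := by
    rw [← hg]; exact Ideal.subset_span (Set.mem_insert _ _)
  have hB : B ∈ Ideal.span ({g} : Set L) := by
    rw [← hg]; exact Ideal.subset_span (Set.mem_insert_of_mem _ rfl)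
  have hgm : g ∈ Ideal.span ({A, B} : Set L) := by
    rw [hg]; exact Ideal.mem_span_singleton_self g
  obtain ⟨c, hc⟩ := Ideal.mem_span_singleton'.mp hA
  obtain ⟨d, hd⟩ := Ideal.mem_span_singleton'.mp hB
  obtain ⟨p, q, hpq⟩ := Ideal.mem_span_pair.mp hgm
  rcases IsLocalRing.isUnit_or_isUnit_of_add_one
      (a := p * c + q * d) (b := 1 - (p * c + q * d)) (by ring) with h1 | h2
  · rcases IsLocalRing.isUnit_or_isUnit_of_isUnit_add h1 with hpc | hqd
    · right
      obtain ⟨cu, rfl⟩ := isUnit_of_mul_isUnit_right hpc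
      refine Ideal.mem_span_singleton'.mpr ⟨d * ↑cu⁻¹, ?_⟩
      have h3 : (↑cu⁻¹ : L) * A = g := by
        rw [← hc, ← mul_assoc, Units.inv_mul, one_mul]
      rw [mul_assoc, h3, hd]
    · left
      obtain ⟨du, rfl⟩ := isUnit_of_mul_isUnit_right hqd
      refine Ideal.mem_span_singleton'.mpr ⟨c * ↑du⁻¹, ?_⟩
      have h3 : (↑du⁻¹ : L) * B = g := by
        rw [← hd, ← mul_assoc, Units.inv_mul, one_mul]
      rw [mul_assoc, h3, hc]
  · obtain ⟨v, hv⟩ := h2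
    have hz : (↑v : L) * g = 0 := by
      rw [hv]; linear_combination -hpq - p * hc - q * hd
    have hg0 : g = 0 := by
      have := congrArg (fun z => (↑v⁻¹ : L) * z) hz
      simpa [← mul_assoc] using this
    left
    rw [← hc, hg0, mul_zero]
    exact Ideal.zero_mem _

end NodalAux

open NodalAux

/-- The ideal `I_θ = ⟨x², y + θx⟩ ⊆ R = k[x,y]/(y² − x³ − λx²)` becomes a
principal ideal in the localization of `R` at the maximal ideal `m = (x,y)`
of the singular point if and only if `θ² − λ ≠ 0`. -/
theorem ideal_principal_iff (k : Type*) [Field k] [IsAlgClosed k] [CharZero k]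
    (lam θ : k) [hm : (singMax k lam).IsPrime] :
    (Ideal.map
        (algebraMap (NodalRing k lam) (Localization.AtPrime (singMax k lam)))
        (Ideal.span {nx k lam ^ 2,
          ny k lam + algebraMap k (NodalRing k lam) θ * nx k lam})).IsPrincipal
      ↔ θ ^ 2 - lam ≠ 0 := by
  constructor
  · intro hP h0
    obtain rfl : θ ^ 2 = lam := sub_eq_zero.mp h0
    obtain ⟨g, hg⟩ := hP
    rw [Ideal.map_span, Set.image_insert_eq, Set.image_singleton] at hg
    rcases span_pair_cases (L := Localization.AtPrime (singMax k (θ ^ 2))) _ _ _ hg with hAB | hBA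
    · -- x² ∈ (u)
      obtain ⟨s, r, hs, hrel⟩ := pullback k (θ ^ 2)
        (ny k (θ ^ 2) + algebraMap k (NodalRing k (θ ^ 2)) θ * nx k (θ ^ 2))
        (nx k (θ ^ 2) ^ 2) hAB
      exact no_rel_x2_u k θ s r hs hrel
    · -- u ∈ (x²)
      obtain ⟨s, r, hs, hrel⟩ := pullback k (θ ^ 2) (nx k (θ ^ 2) ^ 2)
        (ny k (θ ^ 2) + algebraMap k (NodalRing k (θ ^ 2)) θ * nx k (θ ^ 2)) hBA
      exact no_rel_u_x2 k θ s r hs hrel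
  · intro hne
    have hlam : lam - θ ^ 2 ≠ 0 := fun h => hne (by linear_combination -h)
    have key : (ny k lam + algebraMap k (NodalRing k lam) θ * nx k lam) *
        (ny k lam - algebraMap k (NodalRing k lam) θ * nx k lam)
        = nx k lam ^ 2 * (nx k lam + algebraMap k (NodalRing k lam) (lam - θ ^ 2)) := by
      have h1 : ∀ c : k, algebraMap k (NodalRing k lam) c
          = Ideal.Quotient.mk _ (MvPolynomial.C c) := fun _ => rfl
      rw [h1, h1]
      simp only [nx, ny, ← map_mul, ← map_add, ← map_sub, ← map_pow]
      rw [Ideal.Quotient.eq, Ideal.mem_span_singleton]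
      exact ⟨1, by rw [map_sub, map_pow]; ring⟩
    have hx2 : algebraMap (NodalRing k lam) (Localization.AtPrime (singMax k lam)) (nx k lam ^ 2)
        ∈ Ideal.span {algebraMap (NodalRing k lam) (Localization.AtPrime (singMax k lam))
            (ny k lam + algebraMap k (NodalRing k lam) θ * nx k lam)} := by
      have hw : IsUnit (algebraMap (NodalRing k lam) (Localization.AtPrime (singMax k lam))
          (nx k lam + algebraMap k (NodalRing k lam) (lam - θ ^ 2))) := by
        refine (IsLocalization.AtPrime.isUnit_to_map_iff
          (Localization.AtPrime (singMax k lam)) (singMax k lam) _).mpr ?_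
        show _ ∉ singMax k lam
        intro hmem
        have hxm : nx k lam ∈ singMax k lam := Ideal.subset_span (Set.mem_insert _ _)
        have hCm : algebraMap k (NodalRing k lam) (lam - θ ^ 2) ∈ singMax k lam := by
          have := Ideal.sub_mem _ hmem hxm
          simpa using this
        have hun : IsUnit (algebraMap k (NodalRing k lam) (lam - θ ^ 2)) :=
          (isUnit_iff_ne_zero.mpr hlam).map (algebraMap k (NodalRing k lam))
        exact hm.ne_top (Ideal.eq_top_of_isUnit_mem _ hCm hun)
      obtain ⟨w, hwv⟩ := hw
      have hmapkey := congrArg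
        (algebraMap (NodalRing k lam) (Localization.AtPrime (singMax k lam))) key
      rw [map_mul, map_mul, ← hwv] at hmapkey
      refine Ideal.mem_span_singleton'.mpr
        ⟨algebraMap (NodalRing k lam) (Localization.AtPrime (singMax k lam))
          (ny k lam - algebraMap k (NodalRing k lam) θ * nx k lam) * ↑w⁻¹, ?_⟩
      calc algebraMap (NodalRing k lam) (Localization.AtPrime (singMax k lam))
              (ny k lam - algebraMap k (NodalRing k lam) θ * nx k lam) * ↑w⁻¹ *
            algebraMap (NodalRing k lam) (Localization.AtPrime (singMax k lam))
              (ny k lam + algebraMap k (NodalRing k lam) θ * nx k lam)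
          = (algebraMap (NodalRing k lam) (Localization.AtPrime (singMax k lam))
              (ny k lam + algebraMap k (NodalRing k lam) θ * nx k lam) *
             algebraMap (NodalRing k lam) (Localization.AtPrime (singMax k lam))
              (ny k lam - algebraMap k (NodalRing k lam) θ * nx k lam)) * ↑w⁻¹ := by ring
        _ = (algebraMap (NodalRing k lam) (Localization.AtPrime (singMax k lam))
              (nx k lam ^ 2) * ↑w) * ↑w⁻¹ := by rw [hmapkey]
        _ = algebraMap (NodalRing k lam) (Localization.AtPrime (singMax k lam))
              (nx k lam ^ 2) := by rw [mul_assoc, Units.mul_inv, mul_one]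
    rw [Ideal.map_span, Set.image_insert_eq, Set.image_singleton]
    have hspan : Ideal.span
          {algebraMap (NodalRing k lam) (Localization.AtPrime (singMax k lam)) (nx k lam ^ 2),
           algebraMap (NodalRing k lam) (Localization.AtPrime (singMax k lam))
             (ny k lam + algebraMap k (NodalRing k lam) θ * nx k lam)}
        = Ideal.span {algebraMap (NodalRing k lam) (Localization.AtPrime (singMax k lam))
            (ny k lam + algebraMap k (NodalRing k lam) θ * nx k lam)} :=
      Submodule.span_insert_eq_span hx2
    rw [hspan]
    exact ⟨⟨_, rfl⟩⟩
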